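/- For all integers n ≥ 0 and m ≥ 2, the number of partitions of n whose parts have pairwise distinct max m-powers and which contain at most one part not divisible by m equals the number of partitions of n into parts that are powers of m in which the multiplicity of each part is not divisible by m. -/

import Mathlib

/-- The max `m`-power of `N`, i.e. `m ^ s` where `m ^ s` is the largest power
of `m` dividing `N`. -/
def maxMPow (m N : ℕ) : ℕ := m ^ Nat.maxPowDiv m N

namespace MaxMPowAux

lemma maxPowDiv_eq_zero {m x : ℕ} (hx : ¬ m ∣ x) : m.maxPowDiv x = 0 := by
  by_contra h
  exact hx (dvd_trans (dvd_pow_self m h) (Nat.maxPowDiv.pow_dvd (p := m) (n := x)))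

lemma maxMPow_dvd (m x : ℕ) : maxMPow m x ∣ x := Nat.maxPowDiv.pow_dvd (p := m) (n := x)

lemma maxMPow_pow_mul {m : ℕ} (hm : 2 ≤ m) {s t : ℕ} (ht : ¬ m ∣ t) (ht0 : 0 < t) :
    maxMPow m (m ^ s * t) = m ^ s := by
  unfold maxMPow
  rw [show m.maxPowDiv (m ^ s * t) = m.maxPowDiv t + s from Nat.maxPowDiv.base_pow_mul hm ht0.ne' s,
    maxPowDiv_eq_zero ht, zero_add]

lemma not_dvd_div {m : ℕ} (hm : 2 ≤ m) {x : ℕ} (hx : 0 < x) :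
    ¬ m ∣ x / maxMPow m x := by
  intro ⟨t, ht⟩
  have hd : maxMPow m x ∣ x := maxMPow_dvd m x
  have hx' : x = m ^ (m.maxPowDiv x + 1) * t := by
    rw [pow_succ, mul_assoc, ← ht]
    exact (Nat.mul_div_cancel' hd).symm
  have : m.maxPowDiv x + 1 ≤ m.maxPowDiv x :=
    (Nat.pow_dvd_iff_le_padicValNat (p := m) (by omega) hx.ne').mp ⟨t, hx'⟩
  omega

lemma div_maxMPow_pos {m : ℕ} (hm : 2 ≤ m) {x : ℕ} (hx : 0 < x) :
    0 < x / maxMPow m x :=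
  Nat.div_pos (Nat.le_of_dvd hx (maxMPow_dvd m x)) (Nat.pow_pos (by omega))

/-- The forward map on multisets: replace each part `x = m^s * t` by `t` copies of `m^s`. -/
def Fm (m : ℕ) (P : Multiset ℕ) : Multiset ℕ :=
  P.bind fun x => Multiset.replicate (x / maxMPow m x) (maxMPow m x)

/-- The inverse map: replace `c` copies of `v` by the single part `v * c`. -/
def Gm (m : ℕ) (Q : Multiset ℕ) : Multiset ℕ :=
  Q.dedup.map fun v => v * Q.count v

lemma sum_Fm (m : ℕ) (P : Multiset ℕ) : (Fm m P).sum = P.sum := by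
  rw [Fm, Multiset.sum_bind]
  calc (P.map fun x => (Multiset.replicate (x / maxMPow m x) (maxMPow m x)).sum).sum
      = (P.map id).sum := by
        apply congrArg
        apply Multiset.map_congr rfl
        intro x _
        simp [Multiset.sum_replicate, Nat.div_mul_cancel (maxMPow_dvd m x)]
    _ = P.sum := by rw [Multiset.map_id]

lemma mem_Fm {m : ℕ} (hm : 2 ≤ m) {P : Multiset ℕ} (hP : ∀ x ∈ P, 0 < x) {v : ℕ} :
    v ∈ Fm m P ↔ v ∈ P.map (maxMPow m) := by
  simp only [Fm, Multiset.mem_bind, Multiset.mem_replicate, Multiset.mem_map]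
  constructor
  · rintro ⟨x, hx, -, rfl⟩; exact ⟨x, hx, rfl⟩
  · rintro ⟨x, hx, rfl⟩
    exact ⟨x, hx, (div_maxMPow_pos hm (hP x hx)).ne', rfl⟩

lemma count_Fm {m : ℕ} {P : Multiset ℕ}
    (hn : (P.map (maxMPow m)).Nodup) {x : ℕ} (hx : x ∈ P) :
    (Fm m P).count (maxMPow m x) = x / maxMPow m x := by
  obtain ⟨P', rfl⟩ := Multiset.exists_cons_of_mem hx
  rw [Multiset.map_cons, Multiset.nodup_cons] at hn
  rw [Fm, Multiset.cons_bind, Multiset.count_add, Multiset.count_replicate, if_pos rfl]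
  have h0 : (P'.bind fun y =>
      Multiset.replicate (y / maxMPow m y) (maxMPow m y)).count (maxMPow m x) = 0 := by
    rw [Multiset.count_eq_zero]
    intro hmem
    rw [Multiset.mem_bind] at hmem
    obtain ⟨y, hy, hv⟩ := hmem
    rw [Multiset.mem_replicate] at hv
    exact hn.1 (Multiset.mem_map.mpr ⟨y, hy, hv.2.symm⟩)
  rw [h0, add_zero]

lemma Gm_Fm {m : ℕ} (hm : 2 ≤ m) {P : Multiset ℕ} (hP : ∀ x ∈ P, 0 < x)
    (hn : (P.map (maxMPow m)).Nodup) : Gm m (Fm m P) = P := by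
  have hded : (Fm m P).dedup = P.map (maxMPow m) :=
    (Multiset.Nodup.ext (Multiset.nodup_dedup _) hn).mpr
      (fun a => (Multiset.mem_dedup).trans (mem_Fm hm hP))
  rw [Gm, hded, Multiset.map_map]
  calc (P.map fun x => maxMPow m x * (Fm m P).count (maxMPow m x))
      = P.map id := by
        apply Multiset.map_congr rfl
        intro x hx
        simp only [id]
        rw [count_Fm hn hx, Nat.mul_div_cancel' (maxMPow_dvd m x)]
    _ = P := Multiset.map_id P

lemma bind_replicate_count {Q : Multiset ℕ} :
    (Q.dedup.bind fun v => Multiset.replicate (Q.count v) v) = Q := by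
  apply Multiset.ext'
  intro a
  rw [Multiset.count_bind]
  by_cases ha : a ∈ Q
  · obtain ⟨D, hD⟩ := Multiset.exists_cons_of_mem (Multiset.mem_dedup.mpr ha)
    have hnd : (Q.dedup).Nodup := Multiset.nodup_dedup Q
    rw [hD] at hnd ⊢
    rw [Multiset.nodup_cons] at hnd
    rw [Multiset.map_cons, Multiset.sum_cons, Multiset.count_replicate, if_pos rfl]
    have h0 : (D.map fun b => (Multiset.replicate (Q.count b) b).count a).sum = 0 := by
      apply Multiset.sum_eq_zero
      intro c hc
      rw [Multiset.mem_map] at hc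
      obtain ⟨b, hb, rfl⟩ := hc
      rw [Multiset.count_replicate, if_neg]
      intro h; exact hnd.1 (h ▸ hb)
    rw [h0, add_zero]
  · rw [Multiset.count_eq_zero_of_notMem ha]
    apply Multiset.sum_eq_zero
    intro c hc
    rw [Multiset.mem_map] at hc
    obtain ⟨b, hb, rfl⟩ := hc
    rw [Multiset.count_replicate, if_neg]
    intro h; exact ha (h ▸ Multiset.mem_dedup.mp hb)

lemma Fm_Gm {m : ℕ} (hm : 2 ≤ m) {Q : Multiset ℕ}
    (hQ : ∀ v ∈ Q, ∃ k, v = m ^ k) (hc : ∀ v ∈ Q, ¬ m ∣ Q.count v) :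
    Fm m (Gm m Q) = Q := by
  rw [Gm, Fm, Multiset.bind_map]
  have key : ∀ v ∈ Q.dedup,
      (Multiset.replicate ((v * Q.count v) / maxMPow m (v * Q.count v))
        (maxMPow m (v * Q.count v))) = Multiset.replicate (Q.count v) v := by
    intro v hv
    have hvQ : v ∈ Q := Multiset.mem_dedup.mp hv
    obtain ⟨k, rfl⟩ := hQ _ hvQ
    have hcnt : ¬ m ∣ Q.count (m ^ k) := hc _ hvQ
    have hcp : 0 < Q.count (m ^ k) := Multiset.count_pos.mpr hvQ
    rw [maxMPow_pow_mul hm hcnt hcp, Nat.mul_div_cancel_left _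
      (Nat.pow_pos (by omega))]
  rw [Multiset.bind_congr key, bind_replicate_count]

lemma sum_Gm {m : ℕ} (hm : 2 ≤ m) {Q : Multiset ℕ}
    (hQ : ∀ v ∈ Q, ∃ k, v = m ^ k) (hc : ∀ v ∈ Q, ¬ m ∣ Q.count v) :
    (Gm m Q).sum = Q.sum := by
  conv_rhs => rw [← Fm_Gm hm hQ hc]
  rw [sum_Fm]

lemma map_maxMPow_Gm {m : ℕ} (hm : 2 ≤ m) {Q : Multiset ℕ}
    (hQ : ∀ v ∈ Q, ∃ k, v = m ^ k) (hc : ∀ v ∈ Q, ¬ m ∣ Q.count v) :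
    (Gm m Q).map (maxMPow m) = Q.dedup := by
  rw [Gm, Multiset.map_map]
  calc (Q.dedup.map fun v => maxMPow m (v * Q.count v))
      = Q.dedup.map id := by
        apply Multiset.map_congr rfl
        intro v hv
        have hvQ : v ∈ Q := Multiset.mem_dedup.mp hv
        obtain ⟨k, rfl⟩ := hQ _ hvQ
        simp only [id]
        exact maxMPow_pow_mul hm (hc _ hvQ) (Multiset.count_pos.mpr hvQ)
    _ = Q.dedup := Multiset.map_id _

end MaxMPowAux

open MaxMPowAux in
theorem card_distinct_maxMPow_eq_card_powers (n m : ℕ) (hm : 2 ≤ m) :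
    Nat.card {p : n.Partition //
      (p.parts.map fun x => maxMPow m x).Nodup ∧
      p.parts.countP (fun x => ¬ m ∣ x) ≤ 1} =
    Nat.card {p : n.Partition //
      (∀ x ∈ p.parts, ∃ k : ℕ, x = m ^ k) ∧
      (∀ x ∈ p.parts, ¬ m ∣ p.parts.count x)} := by
  apply Nat.card_congr
  refine
    { toFun := fun ⟨p, hp1, _⟩ =>
        ⟨⟨Fm m p.parts, ?_, by rw [sum_Fm]; exact p.parts_sum⟩, ?_, ?_⟩
      invFun := fun ⟨p, hp1, hp2⟩ =>
        ⟨⟨Gm m p.parts, ?_, by rw [sum_Gm hm hp1 hp2]; exact p.parts_sum⟩, ?_, ?_⟩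
      left_inv := ?_
      right_inv := ?_ }
  · -- Fm positivity
    intro v hv
    rw [mem_Fm hm (fun x hx => p.parts_pos hx)] at hv
    obtain ⟨x, _, rfl⟩ := Multiset.mem_map.mp hv
    exact Nat.pow_pos (by omega)
  · -- Fm parts are powers of m
    intro v hv
    rw [mem_Fm hm (fun x hx => p.parts_pos hx)] at hv
    obtain ⟨x, _, rfl⟩ := Multiset.mem_map.mp hv
    exact ⟨_, rfl⟩
  · -- Fm counts not divisible by m
    intro v hv
    rw [mem_Fm hm (fun x hx => p.parts_pos hx)] at hv
    obtain ⟨x, hx, rfl⟩ := Multiset.mem_map.mp hv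
    rw [show (Fm m p.parts).count (maxMPow m x) = x / maxMPow m x from count_Fm hp1 hx]
    exact not_dvd_div hm (p.parts_pos hx)
  · -- Gm positivity
    intro x hx
    rw [Gm, Multiset.mem_map] at hx
    obtain ⟨v, hv, rfl⟩ := hx
    have hvQ := Multiset.mem_dedup.mp hv
    obtain ⟨k, rfl⟩ := hp1 _ hvQ
    exact Nat.mul_pos (Nat.pow_pos (by omega)) (Multiset.count_pos.mpr hvQ)
  · -- Gm has nodup maxMPow map
    rw [map_maxMPow_Gm hm hp1 hp2]
    exact Multiset.nodup_dedup _
  · -- Gm countP ≤ 1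
    rw [Multiset.countP_eq_card_filter]
    have hall : ∀ b ∈ (Gm m p.parts).filter (fun x => ¬ m ∣ x), b = p.parts.count 1 := by
      intro b hb
      rw [Multiset.mem_filter] at hb
      obtain ⟨hbmem, hbnd⟩ := hb
      rw [Gm, Multiset.mem_map] at hbmem
      obtain ⟨v, hv, rfl⟩ := hbmem
      have hvQ := Multiset.mem_dedup.mp hv
      obtain ⟨k, rfl⟩ := hp1 _ hvQ
      have hk : k = 0 := by
        by_contra hk0
        exact hbnd (Dvd.dvd.mul_right (dvd_pow_self m hk0) _)
      subst hk
      simp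
    have hnodupG : (Gm m p.parts).Nodup := by
      apply Multiset.Nodup.of_map (maxMPow m)
      rw [map_maxMPow_Gm hm hp1 hp2]
      exact Multiset.nodup_dedup _
    have hrep := Multiset.eq_replicate_card.mpr hall
    have hnf : ((Gm m p.parts).filter (fun x => ¬ m ∣ x)).Nodup := hnodupG.filter _
    have hcount := (Multiset.nodup_iff_count_le_one.mp hnf) (p.parts.count 1)
    rw [hrep, Multiset.count_replicate_self] at hcount
    exact hcount
  · -- left inverse
    rintro ⟨p, hp1, hp2⟩
    apply Subtype.ext
    apply Nat.Partition.ext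
    exact Gm_Fm hm (fun x hx => p.parts_pos hx) hp1
  · -- right inverse
    rintro ⟨p, hp1, hp2⟩
    apply Subtype.ext
    apply Nat.Partition.ext
    exact Fm_Gm hm hp1 hp2
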